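/- The infinitary abstraction preserves the ω-power: for every L ⊆ Σ*, α_{≤ω}(L^ω) = (α_*(L))^ω, where the abstract ω-power of 𝒰 ⊆ 𝒬 is defined as α_{≤ω}(γ_*(𝒰)^ω). -/

import Mathlib

variable {Q : Type*} {A : Type*}

/-- Reachability in a nondeterministic automaton: `q` is reachable from `p` reading `w`. -/
def Reach (δ : Q → A → Set Q) : Q → List A → Q → Prop
  | p, [], q => p = q
  | p, a :: w, q => ∃ r ∈ δ p a, Reach δ r w q

/-- Reachability visiting some final state along the way (possibly the endpoints). -/
def ReachF (δ : Q → A → Set Q) (Fs : Set Q) (p : Q) (w : List A) (q : Q) : Prop :=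
  ∃ u v r, w = u ++ v ∧ r ∈ Fs ∧ Reach δ p u r ∧ Reach δ r v q

/-- The relation ∼ : `w ∼ u` iff for all states `p q`, reachability and
reachability-through-final-states via `w` and via `u` coincide. -/
def Sim (δ : Q → A → Set Q) (Fs : Set Q) (w u : List A) : Prop :=
  ∀ p q : Q, (Reach δ p w q ↔ Reach δ p u q) ∧ (ReachF δ Fs p w q ↔ ReachF δ Fs p u q)

/-- The class of a word in 𝒬 = Σ⁺/∼ ⊎ {[ε]} : for a nonempty word its ∼-class,
and `[ε] = {ε}` for the empty word. -/
def wordClass (δ : Q → A → Set Q) (Fs : Set Q) (w : List A) : Set (List A) :=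
  {u | (w = [] ∧ u = []) ∨ (w ≠ [] ∧ u ≠ [] ∧ Sim δ Fs w u)}

/-- `C` is an element of 𝒬. -/
def IsClass (δ : Q → A → Set Q) (Fs : Set Q) (C : Set (List A)) : Prop :=
  ∃ w : List A, C = wordClass δ Fs w

/-- Elementwise concatenation of languages of finite words. -/
def mulSet (L M : Set (List A)) : Set (List A) := Set.image2 (· ++ ·) L M

/-- Monoid multiplication of classes: the class of the concatenation of representatives. -/
def classMul (δ : Q → A → Set Q) (Fs : Set Q) (C D : Set (List A)) : Set (List A) :=
  {v | ∃ w ∈ C, ∃ u ∈ D, v ∈ wordClass δ Fs (w ++ u)}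

/-- Finite star of a language. -/
def starSet (L : Set (List A)) : Set (List A) :=
  {w | ∃ l : List (List A), (∀ u ∈ l, u ∈ L) ∧ w = l.flatten}

/-- Possibly infinite words over `A` : Σ^{≤ω}, as stable `Option`-valued streams. -/
def Word (A : Type*) : Type _ := {g : ℕ → Option A // ∀ n, g n = none → g (n + 1) = none}

/-- A finite word as an element of Σ^{≤ω}. -/
def ofList (w : List A) : Word A :=
  ⟨fun n => w[n]?, fun n h => by
    rw [List.getElem?_eq_none_iff] at *
    omega⟩

/-- An infinite word as an element of Σ^{≤ω}. -/
def ofStream (s : ℕ → A) : Word A := ⟨fun n => some (s n), fun n h => by simp at h⟩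

/- The (possibly infinite) concatenation `f 0 · f 1 · f 2 ⋯` of a sequence of finite
words, as an element of Σ^{≤ω}. -/
open Classical in
noncomputable def prodWord (f : ℕ → List A) : Word A :=
  ⟨fun n =>
    if h : ∃ k, n < ((List.range k).flatMap f).length then
      ((List.range h.choose).flatMap f)[n]?
    else none, by
    intro n hn
    dsimp only at hn ⊢
    by_cases h : ∃ k, n < ((List.range k).flatMap f).length
    · exfalso
      rw [dif_pos h, List.getElem?_eq_none_iff] at hn
      have := h.choose_spec
      omega
    · have h2 : ¬ ∃ k, n + 1 < ((List.range k).flatMap f).length := by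
        push_neg at h ⊢
        intro k
        have := h k
        omega
      rw [dif_neg h2]⟩

/-- Concatenation of a finite word with a possibly infinite word. -/
def catWord (u : List A) (w : Word A) : Word A :=
  ⟨fun n => if n < u.length then u[n]? else w.1 (n - u.length), by
    intro n hn
    dsimp only at hn ⊢
    by_cases h : n < u.length
    · exfalso
      rw [if_pos h, List.getElem?_eq_none_iff] at hn
      omega
    · rw [if_neg h] at hn
      have h2 : ¬ n + 1 < u.length := by omega
      rw [if_neg h2]
      have h3 : n + 1 - u.length = (n - u.length) + 1 := by omega
      rw [h3]
      exact w.2 _ hn⟩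

/-- `CD^ω` : all words `w₀w₁w₂⋯` with `w₀ ∈ C` and `wᵢ ∈ D` for `i ≥ 1`. -/
def omegaProd (C D : Set (List A)) : Set (Word A) :=
  {w | ∃ f : ℕ → List A, f 0 ∈ C ∧ (∀ i, 1 ≤ i → f i ∈ D) ∧ w = prodWord f}

/-- `L^ω` : all words `w₁w₂w₃⋯` with all `wᵢ ∈ L`. -/
def omegaPow (L : Set (List A)) : Set (Word A) :=
  {w | ∃ f : ℕ → List A, (∀ i, f i ∈ L) ∧ w = prodWord f}

/-- Acceptance of a finite word (as an NFA). -/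
def NFAAccepts (δ : Q → A → Set Q) (q0 : Q) (Fs : Set Q) (w : List A) : Prop :=
  ∃ q ∈ Fs, Reach δ q0 w q

/-- Büchi acceptance of an infinite word: a run from `q0` visiting `Fs` infinitely often. -/
def BuchiAccepts (δ : Q → A → Set Q) (q0 : Q) (Fs : Set Q) (s : ℕ → A) : Prop :=
  ∃ r : ℕ → Q, r 0 = q0 ∧ (∀ n, r (n + 1) ∈ δ (r n) (s n)) ∧ {n | r n ∈ Fs}.Infinite

/-- The language `L(𝔄) ⊆ Σ^{≤ω}` of the extended Büchi automaton: finite words accepted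
as an NFA together with infinite words accepted as a Büchi automaton. -/
def LangOf (δ : Q → A → Set Q) (q0 : Q) (Fs : Set Q) : Set (Word A) :=
  {w | (∃ l : List A, w = ofList l ∧ NFAAccepts δ q0 Fs l) ∨
       (∃ s : ℕ → A, w = ofStream s ∧ BuchiAccepts δ q0 Fs s)}

/-- The set 𝒬 of classes, as a type. -/
def QClass (δ : Q → A → Set Q) (Fs : Set Q) : Type _ := {C : Set (List A) // IsClass δ Fs C}

/-- The set 𝓒 of pairs `(C, D)` of classes with `CD = C` and `DD = D`, as a type. -/
def CPair (δ : Q → A → Set Q) (Fs : Set Q) : Type _ :=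
  {p : Set (List A) × Set (List A) //
    IsClass δ Fs p.1 ∧ IsClass δ Fs p.2 ∧
    classMul δ Fs p.1 p.2 = p.1 ∧ classMul δ Fs p.2 p.2 = p.2}

/-- The language `CD^ω` denoted by an element of 𝓒. -/
def concPair {δ : Q → A → Set Q} {Fs : Set Q} (p : CPair δ Fs) : Set (Word A) :=
  omegaProd p.1.1 p.1.2

/-- A subset 𝒱 ⊆ 𝓒 is closed: whenever `UV^ω ∩ CD^ω ≠ ∅` for `(C,D) ∈ 𝒱` and
`(U,V) ∈ 𝓒`, then `(U,V) ∈ 𝒱`. -/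
def IsClosedC {δ : Q → A → Set Q} {Fs : Set Q} (𝒱 : Set (CPair δ Fs)) : Prop :=
  ∀ p ∈ 𝒱, ∀ q : CPair δ Fs, (concPair q ∩ concPair p).Nonempty → q ∈ 𝒱

/-- Pre-abstraction 𝔣. -/
def frakF (δ : Q → A → Set Q) (Fs : Set Q) (V : Set (Word A)) : Set (CPair δ Fs) :=
  {p | (concPair p ∩ V).Nonempty}

/-- Pre-concretization 𝔤. -/
def frakG {δ : Q → A → Set Q} {Fs : Set Q} (𝒱 : Set (CPair δ Fs)) : Set (Word A) :=
  ⋃ p ∈ 𝒱, concPair p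

/-- Closure 𝔠(𝒱) = ⋃_{n ≥ 1} (𝔣 ∘ 𝔤)ⁿ(𝒱). -/
def frakC {δ : Q → A → Set Q} {Fs : Set Q} (𝒱 : Set (CPair δ Fs)) : Set (CPair δ Fs) :=
  ⋃ n : ℕ, (fun 𝒲 => frakF δ Fs (frakG 𝒲))^[n + 1] 𝒱

/-- Abstraction α_* -/
def alphaStar (δ : Q → A → Set Q) (Fs : Set Q) (U : Set (List A)) : Set (QClass δ Fs) :=
  {C | (C.1 ∩ U).Nonempty}

/-- Concretization γ_* -/
def gammaStar {δ : Q → A → Set Q} {Fs : Set Q} (𝒰 : Set (QClass δ Fs)) : Set (List A) :=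
  ⋃ C ∈ 𝒰, C.1

/-- Abstraction α_{≤ω}. -/
def alphaOmega (δ : Q → A → Set Q) (Fs : Set Q) (V : Set (Word A)) : Set (CPair δ Fs) :=
  frakC (frakF δ Fs V)

/-- Concretization γ_{≤ω}. -/
def gammaOmega {δ : Q → A → Set Q} {Fs : Set Q} (𝒱 : Set (CPair δ Fs)) : Set (Word A) :=
  frakG 𝒱


theorem reach_append {δ : Q → A → Set Q} {p q : Q} (u v : List A) :
    Reach δ p (u ++ v) q ↔ ∃ r, Reach δ p u r ∧ Reach δ r v q := by
  induction u generalizing p with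
  | nil =>
    constructor
    · intro h; exact ⟨p, rfl, h⟩
    · rintro ⟨r, hr, h⟩; cases hr; exact h
  | cons a u ih =>
    constructor
    · rintro ⟨r, hr, h⟩
      obtain ⟨s, h1, h2⟩ := ih.mp h
      exact ⟨s, ⟨r, hr, h1⟩, h2⟩
    · rintro ⟨s, ⟨r, hr, h1⟩, h2⟩
      exact ⟨r, hr, ih.mpr ⟨s, h1, h2⟩⟩

theorem reachF_append {δ : Q → A → Set Q} {Fs : Set Q} {p q : Q} (w₁ w₂ : List A) :
    ReachF δ Fs p (w₁ ++ w₂) q ↔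
      (∃ r, ReachF δ Fs p w₁ r ∧ Reach δ r w₂ q) ∨
      (∃ r, Reach δ p w₁ r ∧ ReachF δ Fs r w₂ q) := by
  constructor
  · rintro ⟨u, v, r, heq, hrF, h1, h2⟩
    rcases List.append_eq_append_iff.mp heq.symm with ⟨a', ha1, ha2⟩ | ⟨c', hc1, hc2⟩
    · -- w₁ = u ++ a', v = a' ++ w₂
      subst ha1; subst ha2
      obtain ⟨s, hs1, hs2⟩ := (reach_append _ _).mp h2
      exact Or.inl ⟨s, ⟨u, a', r, rfl, hrF, h1, hs1⟩, hs2⟩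
    · -- u = w₁ ++ c', w₂ = c' ++ v
      subst hc1; subst hc2
      obtain ⟨s, hs1, hs2⟩ := (reach_append _ _).mp h1
      exact Or.inr ⟨s, hs1, c', v, r, rfl, hrF, hs2, h2⟩
  · rintro (⟨r, ⟨u, v, s, heq, hsF, h1, h2⟩, h3⟩ | ⟨r, h1, u, v, s, heq, hsF, h2, h3⟩)
    · exact ⟨u, v ++ w₂, s, by rw [heq, List.append_assoc], hsF, h1,
        (reach_append _ _).mpr ⟨r, h2, h3⟩⟩
    · exact ⟨w₁ ++ u, v, s, by rw [heq, List.append_assoc], hsF,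
        (reach_append _ _).mpr ⟨r, h1, h2⟩, h3⟩

theorem sim_refl {δ : Q → A → Set Q} {Fs : Set Q} (w : List A) : Sim δ Fs w w :=
  fun _ _ => ⟨Iff.rfl, Iff.rfl⟩

theorem sim_symm {δ : Q → A → Set Q} {Fs : Set Q} {w u : List A} (h : Sim δ Fs w u) :
    Sim δ Fs u w := fun p q => ⟨(h p q).1.symm, (h p q).2.symm⟩

theorem sim_trans {δ : Q → A → Set Q} {Fs : Set Q} {w u v : List A}
    (h : Sim δ Fs w u) (h' : Sim δ Fs u v) : Sim δ Fs w v :=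
  fun p q => ⟨(h p q).1.trans ((h' p q).1), (h p q).2.trans ((h' p q).2)⟩

theorem sim_append {δ : Q → A → Set Q} {Fs : Set Q} {w u w' u' : List A}
    (h : Sim δ Fs w u) (h' : Sim δ Fs w' u') : Sim δ Fs (w ++ w') (u ++ u') := by
  intro p q
  constructor
  · rw [reach_append, reach_append]
    exact exists_congr fun r => and_congr ((h p r).1) ((h' r q).1)
  · rw [reachF_append, reachF_append]
    exact or_congr
      (exists_congr fun r => and_congr ((h p r).2) ((h' r q).1))
      (exists_congr fun r => and_congr ((h p r).1) ((h' r q).2))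

section Aux

variable (δ : Q → A → Set Q) (Fs : Set Q)

/-- The equivalence with the ε-class separated. -/
def SRel (w u : List A) : Prop :=
  (w = [] ∧ u = []) ∨ (w ≠ [] ∧ u ≠ [] ∧ Sim δ Fs w u)

variable {δ Fs}

theorem SRel.refl (w : List A) : SRel δ Fs w w := by
  rcases eq_or_ne w [] with h | h
  · exact Or.inl ⟨h, h⟩
  · exact Or.inr ⟨h, h, sim_refl w⟩

theorem SRel.symm {w u : List A} (h : SRel δ Fs w u) : SRel δ Fs u w := by
  rcases h with ⟨h1, h2⟩ | ⟨h1, h2, h3⟩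
  · exact Or.inl ⟨h2, h1⟩
  · exact Or.inr ⟨h2, h1, sim_symm h3⟩

theorem SRel.trans {w u v : List A} (h : SRel δ Fs w u) (h' : SRel δ Fs u v) : SRel δ Fs w v := by
  rcases h with ⟨h1, h2⟩ | ⟨h1, h2, h3⟩
  · rcases h' with ⟨h1', h2'⟩ | ⟨h1', h2', h3'⟩
    · exact Or.inl ⟨h1, h2'⟩
    · exact absurd h2 h1'
  · rcases h' with ⟨h1', h2'⟩ | ⟨h1', h2', h3'⟩
    · exact absurd h1' h2
    · exact Or.inr ⟨h1, h2', sim_trans h3 h3'⟩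

theorem SRel.append {w u w' u' : List A} (h : SRel δ Fs w u) (h' : SRel δ Fs w' u') :
    SRel δ Fs (w ++ w') (u ++ u') := by
  rcases h with ⟨h1, h2⟩ | ⟨h1, h2, h3⟩
  · subst h1; subst h2; simpa using h'
  · rcases h' with ⟨h1', h2'⟩ | ⟨h1', h2', h3'⟩
    · subst h1'; subst h2'; simp only [List.append_nil]; exact Or.inr ⟨h1, h2, h3⟩
    · exact Or.inr ⟨by simp [h1], by simp [h2],
        sim_append h3 h3'⟩

theorem mem_wordClass_iff {w u : List A} : u ∈ wordClass δ Fs w ↔ SRel δ Fs w u := Iff.rfl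

theorem mem_wordClass_self (w : List A) : w ∈ wordClass δ Fs w := SRel.refl w

theorem wordClass_eq_iff {w u : List A} :
    wordClass δ Fs w = wordClass δ Fs u ↔ SRel δ Fs w u := by
  constructor
  · intro h
    have : u ∈ wordClass δ Fs w := h ▸ mem_wordClass_self u
    exact this
  · intro h
    ext v
    simp only [mem_wordClass_iff]
    exact ⟨fun h' => h.symm.trans h', fun h' => h.trans h'⟩

theorem wordClass_eq_of_rel {w u : List A} (h : SRel δ Fs w u) :
    wordClass δ Fs w = wordClass δ Fs u := wordClass_eq_iff.mpr h

theorem classMul_wordClass (w u : List A) :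
    classMul δ Fs (wordClass δ Fs w) (wordClass δ Fs u) = wordClass δ Fs (w ++ u) := by
  ext v
  constructor
  · rintro ⟨w', hw', u', hu', hv⟩
    rw [mem_wordClass_iff] at hw' hu' hv ⊢
    exact (SRel.append hw' hu').trans hv
  · intro hv
    exact ⟨w, mem_wordClass_self w, u, mem_wordClass_self u, hv⟩

/-- The setoid ∼ (with ε separated). -/
def relSetoid (δ : Q → A → Set Q) (Fs : Set Q) : Setoid (List A) :=
  ⟨SRel δ Fs, ⟨SRel.refl, SRel.symm, SRel.trans⟩⟩

theorem finite_quotient_rel [Finite Q] :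
    Finite (Quotient (relSetoid δ Fs)) := by
  classical
  let F : List A → ((Q → Q → (Prop × Prop)) × Prop) :=
    fun w => (fun p q => (Reach δ p w q, ReachF δ Fs p w q), w = [])
  have hF : ∀ w u, SRel δ Fs w u → F w = F u := by
    intro w u h
    rcases h with ⟨h1, h2⟩ | ⟨h1, h2, h3⟩
    · subst h1; subst h2; rfl
    · refine Prod.ext (funext fun p => funext fun q => Prod.ext ?_ ?_) ?_
      · exact propext ((h3 p q).1)
      · exact propext ((h3 p q).2)
      · simp [F, h1, h2]
  refine Finite.of_injective (Quotient.lift F hF) ?_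
  rintro ⟨w⟩ ⟨u⟩ h
  refine Quotient.sound ?_
  have h2 : (w = []) = (u = []) := congrArg Prod.snd h
  have h1 := congrArg Prod.fst h
  rcases eq_or_ne w [] with hw | hw
  · exact Or.inl ⟨hw, by rw [← h2]; exact hw⟩
  · refine Or.inr ⟨hw, fun hu => hw ((iff_of_eq h2).mpr hu), fun p q => ?_⟩
    constructor
    · exact iff_of_eq (congrArg Prod.fst (congrFun (congrFun h1 p) q))
    · exact iff_of_eq (congrArg Prod.snd (congrFun (congrFun h1 p) q))

/-- The concatenation `f i ++ f (i+1) ++ ⋯ ++ f (j-1)`. -/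
def seg (f : ℕ → List A) (i j : ℕ) : List A := (List.range' i (j - i)).flatMap f

theorem seg_zero (f : ℕ → List A) (k : ℕ) : seg f 0 k = (List.range k).flatMap f := by
  rw [seg, List.range_eq_range', Nat.sub_zero]

theorem seg_append (f : ℕ → List A) {i j k : ℕ} (hij : i ≤ j) (hjk : j ≤ k) :
    seg f i j ++ seg f j k = seg f i k := by
  rw [seg, seg, seg, ← List.flatMap_append]
  congr 1
  have := List.range'_append (s := i) (m := j - i) (n := k - j) (step := 1)
  rw [one_mul] at this
  rw [show i + (j - i) = j by omega] at this
  rw [this]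
  congr 1
  omega

theorem seg_rel {f g : ℕ → List A} (h : ∀ t, SRel δ Fs (f t) (g t)) (i j : ℕ) :
    SRel δ Fs (seg f i j) (seg g i j) := by
  rw [seg, seg]
  induction List.range' i (j - i) with
  | nil => exact Or.inl ⟨rfl, rfl⟩
  | cons a l ih => exact SRel.append (h a) ih

theorem seg_zero_prefix (f : ℕ → List A) {k l : ℕ} (h : k ≤ l) :
    seg f 0 k <+: seg f 0 l := by
  rw [← seg_append f (Nat.zero_le k) h]
  exact List.prefix_append _ _

theorem prefix_getElem? {u v : List A} (h : u <+: v) {n : ℕ} (hn : n < u.length) :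
    v[n]? = u[n]? := by
  obtain ⟨t, rfl⟩ := h
  rw [List.getElem?_append, if_pos hn]

theorem prodWord_apply_eq (f : ℕ → List A) (k n : ℕ) (h : n < (seg f 0 k).length) :
    (prodWord f).1 n = (seg f 0 k)[n]? := by
  have hex : ∃ m, n < ((List.range m).flatMap f).length := ⟨k, by rwa [← seg_zero]⟩
  classical
  show dite _ _ _ = _
  rw [dif_pos hex]
  have hc : n < (seg f 0 hex.choose).length := by rw [seg_zero]; exact hex.choose_spec
  rw [← seg_zero]
  rcases le_total hex.choose k with hle | hle
  · rw [prefix_getElem? (seg_zero_prefix f hle) hc]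
  · rw [← prefix_getElem? (seg_zero_prefix f hle) h]

theorem prodWord_congr {f g : ℕ → List A}
    (hfg : ∀ k, ∃ l, seg f 0 k <+: seg g 0 l)
    (hgf : ∀ k, ∃ l, seg g 0 k <+: seg f 0 l) :
    prodWord f = prodWord g := by
  apply Subtype.ext
  funext n
  by_cases hf : ∃ k, n < ((List.range k).flatMap f).length
  · obtain ⟨k, hk⟩ := hf
    rw [← seg_zero] at hk
    obtain ⟨l, hl⟩ := hfg k
    have hk' : n < (seg g 0 l).length := lt_of_lt_of_le hk hl.length_le
    rw [prodWord_apply_eq f k n hk, prodWord_apply_eq g l n hk',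
      prefix_getElem? hl hk]
  · have hg : ¬ ∃ k, n < ((List.range k).flatMap g).length := by
      rintro ⟨k, hk⟩
      rw [← seg_zero] at hk
      obtain ⟨l, hl⟩ := hgf k
      exact hf ⟨l, by rw [← seg_zero]; exact lt_of_lt_of_le hk hl.length_le⟩
    classical
    show dite _ _ _ = dite _ _ _
    rw [dif_neg hf, dif_neg hg]

theorem prodWord_regroup (f : ℕ → List A) (n : ℕ → ℕ) (hmono : StrictMono n) (h0 : n 0 = 0) :
    prodWord f = prodWord (fun k => seg f (n k) (n (k + 1))) := by
  have hP : ∀ k, seg (fun k => seg f (n k) (n (k + 1))) 0 k = seg f 0 (n k) := by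
    intro k
    induction k with
    | zero => simp [seg, h0]
    | succ k ih =>
      rw [← seg_append (fun k => seg f (n k) (n (k + 1))) (Nat.zero_le k) (Nat.le_succ k), ih]
      rw [show seg (fun k => seg f (n k) (n (k + 1))) k (k+1) = seg f (n k) (n (k+1)) by
        simp [seg]]
      exact seg_append f (Nat.zero_le _) (hmono.monotone (Nat.le_succ k))
  apply prodWord_congr
  · intro k
    exact ⟨k, by rw [hP k]; exact seg_zero_prefix f hmono.le_apply⟩
  · intro k
    exact ⟨n k, by rw [hP k]⟩

theorem pigeon {κ : Type*} [Finite κ] {S : Set ℕ} (hS : S.Infinite) (g : ℕ → κ) :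
    ∃ k, {x ∈ S | g x = k}.Infinite := by
  by_contra h
  push_neg at h
  have : S.Finite := by
    have : S ⊆ ⋃ k, {x ∈ S | g x = k} := fun x hx => Set.mem_iUnion.mpr ⟨g x, hx, rfl⟩
    exact (Set.finite_iUnion h).subset this
  exact hS this

theorem ramsey_step {κ : Type*} [Finite κ] (c : ℕ → ℕ → κ) {S : Set ℕ} (hS : S.Infinite) :
    ∃ q : ℕ × κ × Set ℕ, q.1 ∈ S ∧ q.2.2.Infinite ∧ q.2.2 ⊆ S ∧
      ∀ x ∈ q.2.2, q.1 < x ∧ c q.1 x = q.2.1 := by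
  obtain ⟨a, ha⟩ := hS.nonempty
  have h1 : {x ∈ S | a < x}.Infinite := by
    have : S \ {x | x ≤ a} ⊆ {x ∈ S | a < x} := by
      intro x hx; exact ⟨hx.1, by simpa using hx.2⟩
    exact ((hS.diff (Set.finite_Iic a)).mono this)
  obtain ⟨k, hk⟩ := pigeon h1 (c a)
  refine ⟨(a, k, {x ∈ S | a < x ∧ c a x = k}), ha, ?_, fun x hx => hx.1, fun x hx => hx.2⟩
  apply hk.mono
  rintro x ⟨⟨hx1, hx2⟩, hx3⟩
  exact ⟨hx1, hx2, hx3⟩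

theorem ramsey_pairs {κ : Type*} [Finite κ] (c : ℕ → ℕ → κ) :
    ∃ (φ : ℕ → ℕ) (k : κ), StrictMono φ ∧ ∀ i j, i < j → c (φ i) (φ j) = k := by
  classical
  let F : {S : Set ℕ // S.Infinite} → ℕ × κ × {S : Set ℕ // S.Infinite} :=
    fun p => ⟨(ramsey_step c p.2).choose.1, (ramsey_step c p.2).choose.2.1,
      (ramsey_step c p.2).choose.2.2, (ramsey_step c p.2).choose_spec.2.1⟩
  let chain : ℕ → {S : Set ℕ // S.Infinite} :=
    fun n => Nat.rec ⟨Set.univ, Set.infinite_univ⟩ (fun _ p => (F p).2.2) n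
  let a : ℕ → ℕ := fun n => (F (chain n)).1
  let k : ℕ → κ := fun n => (F (chain n)).2.1
  have hchain : ∀ n, chain (n + 1) = (F (chain n)).2.2 := fun n => rfl
  have hmem : ∀ n, a n ∈ (chain n).1 := fun n => (ramsey_step c (chain n).2).choose_spec.1
  have hsub : ∀ n, ((chain (n + 1)).1 : Set ℕ) ⊆ (chain n).1 := by
    intro n x hx
    rw [hchain n] at hx
    exact (ramsey_step c (chain n).2).choose_spec.2.2.1 hx
  have hcol : ∀ n, ∀ x ∈ (chain (n + 1)).1, a n < x ∧ c (a n) x = k n := by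
    intro n x hx
    rw [hchain n] at hx
    exact (ramsey_step c (chain n).2).choose_spec.2.2.2 x hx
  have hsub' : ∀ {m n}, m ≤ n → ((chain n).1 : Set ℕ) ⊆ (chain m).1 := by
    intro m n h
    induction n with
    | zero => cases Nat.le_zero.mp h; exact fun x hx => hx
    | succ n ih =>
      rcases Nat.lt_or_ge m (n + 1) with h' | h'
      · exact fun x hx => ih (Nat.lt_succ_iff.mp h') (hsub n hx)
      · cases Nat.le_antisymm h h'; exact fun x hx => hx
  have key : ∀ i j, i < j → a i < a j ∧ c (a i) (a j) = k i := by
    intro i j hij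
    exact hcol i (a j) (hsub' hij (hmem j))
  obtain ⟨k₀, hk₀⟩ := pigeon (Set.infinite_univ (α := ℕ)) k
  have hT : {n | k n = k₀}.Infinite := by
    apply hk₀.mono; rintro x ⟨_, hx⟩; exact hx
  refine ⟨fun i => a (Nat.nth (fun n => k n = k₀) i), k₀, ?_, ?_⟩
  · intro i j hij
    exact (key _ _ (Nat.nth_strictMono hT hij)).1
  · intro i j hij
    rw [(key _ _ (Nat.nth_strictMono hT hij)).2]
    exact Nat.nth_mem_of_infinite hT i

theorem omegaPow_mono {L M : Set (List A)} (h : L ⊆ M) : omegaPow L ⊆ omegaPow M := by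
  rintro w ⟨f, hf, rfl⟩
  exact ⟨f, fun i => h (hf i), rfl⟩

theorem frakF_mono {V W : Set (Word A)} (h : V ⊆ W) :
    frakF δ Fs V ⊆ frakF δ Fs W := by
  rintro p ⟨w, hw1, hw2⟩
  exact ⟨w, hw1, h hw2⟩

theorem frakG_mono {𝒱 𝒲 : Set (CPair δ Fs)} (h : 𝒱 ⊆ 𝒲) : frakG 𝒱 ⊆ frakG 𝒲 := by
  intro w hw
  simp only [frakG, Set.mem_iUnion] at hw ⊢
  obtain ⟨p, hp, hwp⟩ := hw
  exact ⟨p, h hp, hwp⟩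

theorem fg_iterate_mono {𝒱 𝒲 : Set (CPair δ Fs)} (h : 𝒱 ⊆ 𝒲) (n : ℕ) :
    (fun 𝒳 => frakF δ Fs (frakG 𝒳))^[n] 𝒱 ⊆ (fun 𝒳 => frakF δ Fs (frakG 𝒳))^[n] 𝒲 := by
  induction n with
  | zero => exact h
  | succ n ih =>
    rw [Function.iterate_succ_apply', Function.iterate_succ_apply']
    exact frakF_mono (frakG_mono ih)

theorem frakC_mono {𝒱 𝒲 : Set (CPair δ Fs)} (h : 𝒱 ⊆ 𝒲) : frakC 𝒱 ⊆ frakC 𝒲 := by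
  intro p hp
  simp only [frakC, Set.mem_iUnion] at hp ⊢
  obtain ⟨n, hn⟩ := hp
  exact ⟨n, fg_iterate_mono h (n + 1) hn⟩

theorem frakC_subset_of_subset_fg {𝒜 𝒲 : Set (CPair δ Fs)}
    (h : 𝒜 ⊆ frakF δ Fs (frakG 𝒲)) : frakC 𝒜 ⊆ frakC 𝒲 := by
  intro p hp
  simp only [frakC, Set.mem_iUnion] at hp ⊢
  obtain ⟨n, hn⟩ := hp
  refine ⟨n + 1, ?_⟩
  have h1 := fg_iterate_mono h (n + 1) hn
  rwa [← Function.iterate_succ_apply (fun 𝒳 => frakF δ Fs (frakG 𝒳)) (n + 1)] at h1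

theorem subset_gammaStar_alphaStar (L : Set (List A)) :
    L ⊆ gammaStar (alphaStar δ Fs L) := by
  intro w hw
  simp only [gammaStar, alphaStar, Set.mem_iUnion]
  exact ⟨⟨wordClass δ Fs w, w, rfl⟩, ⟨w, mem_wordClass_self w, hw⟩, mem_wordClass_self w⟩

theorem key_lemma [Finite Q] (L : Set (List A)) :
    frakF δ Fs (omegaPow (gammaStar (alphaStar δ Fs L))) ⊆
      frakF δ Fs (frakG (frakF δ Fs (omegaPow L))) := by
  rintro p ⟨w, hw1, hw2⟩
  obtain ⟨f, hf, rfl⟩ := hw2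
  -- choose L-representatives of the factors
  have hrep : ∀ i, ∃ y, y ∈ L ∧ SRel δ Fs (f i) y := by
    intro i
    have := hf i
    simp only [gammaStar, Set.mem_iUnion] at this
    obtain ⟨C, hC, hfC⟩ := this
    obtain ⟨x, hx⟩ := C.2
    obtain ⟨y, hyC, hyL⟩ := hC
    rw [hx] at hfC hyC
    exact ⟨y, hyL, (SRel.symm hfC).trans hyC⟩
  choose g hgL hrel using hrep
  -- Ramsey
  letI s : Setoid (List A) := relSetoid δ Fs
  haveI : Finite (Quotient s) := finite_quotient_rel
  obtain ⟨m, k₀, hm, hc⟩ := ramsey_pairs (fun i j => Quotient.mk s (seg f i j))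
  have hblock : ∀ i j i' j', i < j → i' < j' →
      SRel δ Fs (seg f (m i) (m j)) (seg f (m i') (m j')) := by
    intro i j i' j' hij hij'
    exact Quotient.exact ((hc i j hij).trans (hc i' j' hij').symm)
  have h01 : m 0 ≤ m 1 := (hm (Nat.lt_succ_self 0)).le
  have h12 : m 1 ≤ m 2 := (hm (Nat.lt_succ_self 1)).le
  set U : Set (List A) := wordClass δ Fs (seg f 0 (m 1)) with hU
  set D : Set (List A) := wordClass δ Fs (seg f (m 0) (m 1)) with hD
  have hseg02 : SRel δ Fs (seg f 0 (m 2)) (seg f 0 (m 1)) := by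
    rw [← seg_append f (Nat.zero_le (m 0)) h01, ← seg_append f (Nat.zero_le (m 0)) (h01.trans h12)]
    exact SRel.append (SRel.refl _) (hblock 0 2 0 1 (by omega) (by omega))
  have hDD : classMul δ Fs D D = D := by
    rw [hD, classMul_wordClass]
    apply wordClass_eq_of_rel
    have s1 : SRel δ Fs (seg f (m 0) (m 1) ++ seg f (m 0) (m 1))
        (seg f (m 0) (m 1) ++ seg f (m 1) (m 2)) :=
      SRel.append (SRel.refl _) (hblock 0 1 1 2 (by omega) (by omega))
    rw [seg_append f h01 h12] at s1
    exact s1.trans (hblock 0 2 0 1 (by omega) (by omega))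
  have hUD : classMul δ Fs U D = U := by
    rw [hU, hD, classMul_wordClass]
    apply wordClass_eq_of_rel
    have s1 : SRel δ Fs (seg f 0 (m 1) ++ seg f (m 0) (m 1))
        (seg f 0 (m 1) ++ seg f (m 1) (m 2)) :=
      SRel.append (SRel.refl _) (hblock 0 1 1 2 (by omega) (by omega))
    rw [seg_append f (Nat.zero_le (m 1)) h12] at s1
    exact s1.trans hseg02
  set q : CPair δ Fs := ⟨(U, D), ⟨_, hU⟩, ⟨_, hD⟩, hUD, hDD⟩ with hq
  -- the regrouping sequence
  set n : ℕ → ℕ := fun t => if t = 0 then 0 else m t with hn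
  have hn0 : n 0 = 0 := rfl
  have hnmono : StrictMono n := by
    intro i j hij
    have hj : n j = m j := if_neg (by omega)
    by_cases hi : i = 0
    · subst hi
      rw [hn0, hj]
      exact lt_of_le_of_lt (Nat.zero_le (m 0)) (hm hij)
    · have hi' : n i = m i := if_neg hi
      rw [hi', hj]
      exact hm hij
  have hnsucc : ∀ k, 1 ≤ k → n k = m k := fun k hk => if_neg (by omega)
  -- w ∈ concPair q
  have hwq : prodWord f ∈ concPair q := by
    refine ⟨fun k => seg f (n k) (n (k + 1)), ?_, ?_, prodWord_regroup f n hnmono hn0⟩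
    · show seg f (n 0) (n 1) ∈ U
      rw [hn0, hnsucc 1 le_rfl]
      exact mem_wordClass_self _
    · intro k hk
      show seg f (n k) (n (k + 1)) ∈ D
      rw [hnsucc k hk, hnsucc (k + 1) (by omega)]
      exact (hblock 0 1 k (k + 1) (by omega) (by omega) : _)
  -- the witness in L^ω
  have hvq : prodWord g ∈ concPair q := by
    refine ⟨fun k => seg g (n k) (n (k + 1)), ?_, ?_, prodWord_regroup g n hnmono hn0⟩
    · show seg g (n 0) (n 1) ∈ U
      rw [hn0, hnsucc 1 le_rfl]
      exact (seg_rel hrel 0 (m 1) : _)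
    · intro k hk
      show seg g (n k) (n (k + 1)) ∈ D
      rw [hnsucc k hk, hnsucc (k + 1) (by omega)]
      exact ((hblock 0 1 k (k + 1) (by omega) (by omega)).trans
        (seg_rel hrel (m k) (m (k + 1))) : _)
  have hqF : q ∈ frakF δ Fs (omegaPow L) := ⟨prodWord g, hvq, g, hgL, rfl⟩
  refine ⟨prodWord f, hw1, ?_⟩
  simp only [frakG, Set.mem_iUnion]
  exact ⟨q, hqF, hwq⟩

-- AUX5

end Aux

/-- the infinitary abstraction preserves the ω-power:
`α_{≤ω}(L^ω) = (α_*(L))^ω`, where `𝒰^ω := α_{≤ω}(γ_*(𝒰)^ω)`. -/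
theorem alphaOmega_omegaPow {Q A : Type*} [Finite Q] [Finite A]
    (δ : Q → A → Set Q) (Fs : Set Q) (L : Set (List A)) :
    alphaOmega δ Fs (omegaPow L) =
      alphaOmega δ Fs (omegaPow (gammaStar (alphaStar δ Fs L))) := by
  apply subset_antisymm
  · exact frakC_mono (frakF_mono (omegaPow_mono (subset_gammaStar_alphaStar L)))
  · exact frakC_subset_of_subset_fg (key_lemma L)
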